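/- Let B be a C*-algebra and A a closed *-subalgebra satisfying the ideal intersection property and axiom (inv). Then for every regular B-invariant ideal I of A, Ann_B(Ann_A(I)) = Ann_B(Ann_B(I)). -/
import Mathlib


open Pointwise

variable {B : Type*} [NonUnitalCStarAlgebra B]

/-- Closed linear span of a subset of `B`. -/
def clSpan (S : Set B) : Set B := closure (Submodule.span ℂ S : Set B)

/-- `S` is `B`-invariant if `[SB] = [BS]`. -/
def BInvariant (S : Set B) : Prop :=
  clSpan (S * (Set.univ : Set B)) = clSpan ((Set.univ : Set B) * S)

/-- The closed two-sided ideal of `B` generated by `S`, namely `[BSB]`. -/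
def idealGen (S : Set B) : Set B :=
  clSpan ((Set.univ : Set B) * S * (Set.univ : Set B))

/-- Two-sided annihilator of `S` computed in `B`. -/
def annB (S : Set B) : Set B := {x | ∀ s ∈ S, x * s = 0 ∧ s * x = 0}

/-- Two-sided annihilator of `S` computed inside the subset `A ⊆ B`. -/
def annIn (A S : Set B) : Set B := {x ∈ A | ∀ s ∈ S, x * s = 0 ∧ s * x = 0}

/-- A closed *-subalgebra of `B`, regarded as a subset. -/
structure ClosedStarSubalgebra (A : Set B) : Prop where
  isClosed : IsClosed A
  zero_mem : (0 : B) ∈ A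
  add_mem : ∀ ⦃x y : B⦄, x ∈ A → y ∈ A → x + y ∈ A
  smul_mem : ∀ (c : ℂ) ⦃x : B⦄, x ∈ A → c • x ∈ A
  mul_mem : ∀ ⦃x y : B⦄, x ∈ A → y ∈ A → x * y ∈ A
  star_mem : ∀ ⦃x : B⦄, x ∈ A → star x ∈ A

/-- A norm-closed two-sided ideal of `B`. -/
structure ClosedTwoSidedIdeal (J : Set B) : Prop where
  isClosed : IsClosed J
  zero_mem : (0 : B) ∈ J
  add_mem : ∀ ⦃x y : B⦄, x ∈ J → y ∈ J → x + y ∈ J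
  smul_mem : ∀ (c : ℂ) ⦃x : B⦄, x ∈ J → c • x ∈ J
  mul_mem_left : ∀ (a : B) ⦃x : B⦄, x ∈ J → a * x ∈ J
  mul_mem_right : ∀ (a : B) ⦃x : B⦄, x ∈ J → x * a ∈ J

/-- A norm-closed two-sided ideal of the subalgebra `A ⊆ B`. -/
structure IdealOf (A J : Set B) : Prop where
  subset : J ⊆ A
  isClosed : IsClosed J
  zero_mem : (0 : B) ∈ J
  add_mem : ∀ ⦃x y : B⦄, x ∈ J → y ∈ J → x + y ∈ J
  smul_mem : ∀ (c : ℂ) ⦃x : B⦄, x ∈ J → c • x ∈ J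
  mul_mem_left : ∀ ⦃a : B⦄, a ∈ A → ∀ ⦃x : B⦄, x ∈ J → a * x ∈ J
  mul_mem_right : ∀ ⦃a : B⦄, a ∈ A → ∀ ⦃x : B⦄, x ∈ J → x * a ∈ J

/-- The ideal intersection property: every nonzero closed two-sided ideal of `B`
meets `A` nontrivially. -/
def IdealIntersectionProperty (A : Set B) : Prop :=
  ∀ J : Set B, ClosedTwoSidedIdeal J → J ≠ {0} → J ∩ A ≠ {0}

/-- Axiom (inv): `J ∩ A` is `B`-invariant for every closed two-sided ideal `J` of `B`. -/
def AxiomInv (A : Set B) : Prop :=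
  ∀ J : Set B, ClosedTwoSidedIdeal J → BInvariant (J ∩ A)

/-- A regular ideal of `B`. -/
def RegularIdealB (J : Set B) : Prop :=
  ClosedTwoSidedIdeal J ∧ annB (annB J) = J

/-- A regular ideal of the subalgebra `A`. -/
def RegularIdealIn (A I : Set B) : Prop :=
  IdealOf A I ∧ annIn A (annIn A I) = I

/-- A normalizer of `A` in `B`. -/
def IsNormalizer (A : Set B) (n : B) : Prop :=
  (∀ a ∈ A, star n * a * n ∈ A) ∧ (∀ a ∈ A, n * a * star n ∈ A)

/-- `A` contains an approximate unit for `B`. -/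
def ContainsApproxUnit (A : Set B) : Prop :=
  ∃ (ι : Type) (l : Filter ι) (e : ι → B), l.NeBot ∧ (∀ i, e i ∈ A) ∧
    ∀ b : B, Filter.Tendsto (fun i => e i * b) l (nhds b) ∧
      Filter.Tendsto (fun i => b * e i) l (nhds b)

/-- `A` is a regular subalgebra of `B`: the normalizers span a dense subspace of
`B` and `A` contains an approximate unit for `B`. -/
def RegularSubalgebra (A : Set B) : Prop :=
  ClosedStarSubalgebra A ∧ clSpan {n : B | IsNormalizer A n} = Set.univ ∧
    ContainsApproxUnit A


lemma clSpan_mul_zero {x : B} {S : Set B} (h : ∀ y ∈ S, y * x = 0) :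
    ∀ z ∈ clSpan S, z * x = 0 := by
  have hspan : ∀ z ∈ Submodule.span ℂ S, z * x = 0 := by
    intro z hz
    induction hz using Submodule.span_induction with
    | mem y hy => exact h y hy
    | zero => simp
    | add a b _ _ ha hb => rw [add_mul, ha, hb, add_zero]
    | smul c a _ ha => rw [smul_mul_assoc, ha, smul_zero]
  intro z hz
  have hcl : IsClosed {w : B | w * x = 0} :=
    isClosed_eq (continuous_mul_right x) continuous_const
  have : z ∈ closure {w : B | w * x = 0} :=
    closure_mono (fun w hw => hspan w hw) hz
  rwa [hcl.closure_eq] at this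

lemma mul_clSpan_zero {x : B} {S : Set B} (h : ∀ y ∈ S, x * y = 0) :
    ∀ z ∈ clSpan S, x * z = 0 := by
  have hspan : ∀ z ∈ Submodule.span ℂ S, x * z = 0 := by
    intro z hz
    induction hz using Submodule.span_induction with
    | mem y hy => exact h y hy
    | zero => simp
    | add a b _ _ ha hb => rw [mul_add, ha, hb, add_zero]
    | smul c a _ ha => rw [mul_smul_comm, ha, smul_zero]
  intro z hz
  have hcl : IsClosed {w : B | x * w = 0} :=
    isClosed_eq (continuous_mul_left x) continuous_const
  have : z ∈ closure {w : B | x * w = 0} :=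
    closure_mono (fun w hw => hspan w hw) hz
  rwa [hcl.closure_eq] at this

lemma annB_closedTwoSidedIdeal (S : Set B) (hS : BInvariant S) :
    ClosedTwoSidedIdeal (annB S) := by
  constructor
  · have : annB S = ⋂ s ∈ S, ({x : B | x * s = 0} ∩ {x : B | s * x = 0}) := by
      ext x; simp [annB, Set.mem_iInter, forall_and]
    rw [this]
    exact isClosed_biInter fun s _ =>
      (isClosed_eq (continuous_mul_right s) continuous_const).inter
        (isClosed_eq (continuous_mul_left s) continuous_const)
  · intro s hs; simp
  · intro x y hx hy s hs
    obtain ⟨hx1, hx2⟩ := hx s hs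
    obtain ⟨hy1, hy2⟩ := hy s hs
    constructor
    · rw [add_mul, hx1, hy1, add_zero]
    · rw [mul_add, hx2, hy2, add_zero]
  · intro c x hx s hs
    obtain ⟨hx1, hx2⟩ := hx s hs
    constructor
    · rw [smul_mul_assoc, hx1, smul_zero]
    · rw [mul_smul_comm, hx2, smul_zero]
  · -- mul_mem_left : b * x ∈ annB S
    intro b x hx s hs
    constructor
    · -- (b * x) * s = 0 : uses s * b ∈ clSpan (S * univ) = clSpan (univ * S)? no:
      rw [mul_assoc, (hx s hs).1, mul_zero]
    · -- s * (b * x) = (s * b) * x, with s * b ∈ clSpan (S * univ) = clSpan (univ * S)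
      have hmem : s * b ∈ clSpan ((Set.univ : Set B) * S) := by
        rw [← hS]
        exact subset_closure (Submodule.subset_span
          (Set.mul_mem_mul hs (Set.mem_univ b)))
      have := clSpan_mul_zero (x := x) (S := (Set.univ : Set B) * S) ?_ _ hmem
      · rw [← mul_assoc, this]
      · rintro y ⟨b', -, s', hs', rfl⟩
        rw [mul_assoc, (hx s' hs').2, mul_zero]
  · -- mul_mem_right : x * b ∈ annB S
    intro b x hx s hs
    constructor
    · -- (x * b) * s = x * (b * s), with b * s ∈ clSpan (univ * S) = clSpan (S * univ)
      have hmem : b * s ∈ clSpan (S * (Set.univ : Set B)) := by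
        rw [hS]
        exact subset_closure (Submodule.subset_span
          (Set.mul_mem_mul (Set.mem_univ b) hs))
      have := mul_clSpan_zero (x := x) (S := S * (Set.univ : Set B)) ?_ _ hmem
      · rw [mul_assoc, this]
      · rintro y ⟨s', hs', b', -, rfl⟩
        rw [← mul_assoc, (hx s' hs').1, zero_mul]
    · rw [← mul_assoc, (hx s hs).2, zero_mul]

lemma annB_antitone {S T : Set B} (h : S ⊆ T) : annB T ⊆ annB S :=
  fun _ hx s hs => hx s (h hs)

/-- Under the ideal intersection property and axiom (inv), for every regular
`B`-invariant ideal `I` of `A`, `Ann_B(Ann_A(I)) = Ann_B(Ann_B(I))`. -/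
theorem stmt14 (A : Set B) (hA : ClosedStarSubalgebra A)
    (hiip : IdealIntersectionProperty A) (hinv : AxiomInv A)
    (I : Set B) (hI : RegularIdealIn A I) (hBinv : BInvariant I) :
    annB (annIn A I) = annB (annB I) := by
  classical
  set J := annB I with hJdef
  have hJ : ClosedTwoSidedIdeal J := annB_closedTwoSidedIdeal I hBinv
  have hJA : annIn A I = J ∩ A := by
    ext x
    simp only [annIn, annB, Set.mem_setOf_eq, Set.mem_inter_iff, hJdef]
    tauto
  have hinvJA : BInvariant (J ∩ A) := hinv J hJ
  have hannJA : ClosedTwoSidedIdeal (annB (J ∩ A)) :=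
    annB_closedTwoSidedIdeal _ hinvJA
  set K := J ∩ annB (J ∩ A) with hKdef
  have hK : ClosedTwoSidedIdeal K := by
    constructor
    · exact hJ.isClosed.inter hannJA.isClosed
    · exact ⟨hJ.zero_mem, hannJA.zero_mem⟩
    · exact fun x y hx hy => ⟨hJ.add_mem hx.1 hy.1, hannJA.add_mem hx.2 hy.2⟩
    · exact fun c x hx => ⟨hJ.smul_mem c hx.1, hannJA.smul_mem c hx.2⟩
    · exact fun a x hx => ⟨hJ.mul_mem_left a hx.1, hannJA.mul_mem_left a hx.2⟩
    · exact fun a x hx => ⟨hJ.mul_mem_right a hx.1, hannJA.mul_mem_right a hx.2⟩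
  have hKA : K ∩ A = {0} := by
    apply Set.eq_singleton_iff_unique_mem.mpr
    constructor
    · exact ⟨⟨hJ.zero_mem, hannJA.zero_mem⟩, hA.zero_mem⟩
    · rintro a ⟨⟨haJ, hann⟩, haA⟩
      set c := a * star a with hc
      have hcJA : c ∈ J ∩ A :=
        ⟨hJ.mul_mem_right (star a) haJ, hA.mul_mem haA (hA.star_mem haA)⟩
      obtain ⟨hac, hca⟩ := hann c hcJA
      have hc2 : c * c = 0 := by
        have h' : c * a * star a = c * c := by rw [mul_assoc, ← hc]
        rw [← h', hca, zero_mul]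
      have hcstar : star c = c := by rw [hc, star_mul, star_star]
      have hc0 : c = 0 := by
        have : ‖c‖ * ‖c‖ = 0 := by
          rw [← CStarRing.norm_star_mul_self, hcstar, hc2, norm_zero]
        have : ‖c‖ = 0 := by nlinarith [norm_nonneg c]
        exact norm_eq_zero.mp this
      have : ‖a‖ * ‖a‖ = 0 := by
        have h1 : ‖star a‖ * ‖star a‖ = ‖star (star a) * star a‖ :=
          (CStarRing.norm_star_mul_self).symm
        rw [norm_star, star_star, ← hc, hc0, norm_zero] at h1
        exact h1
      have : ‖a‖ = 0 := by nlinarith [norm_nonneg a]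
      exact norm_eq_zero.mp this
  have hK0 : K = {0} := by
    by_contra h
    exact (hiip K hK h) hKA
  rw [hJA]
  apply Set.Subset.antisymm
  · intro x hx j hj
    have hxj : x * j ∈ K := ⟨hJ.mul_mem_left x hj, hannJA.mul_mem_right j hx⟩
    have hjx : j * x ∈ K := ⟨hJ.mul_mem_right x hj, hannJA.mul_mem_left j hx⟩
    rw [hK0] at hxj hjx
    exact ⟨hxj, hjx⟩
  · exact annB_antitone Set.inter_subset_left
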